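/- arXiv:2007.06937 — 3 statements merged into one kernel-verified Lean document; each statement's English description precedes it below -/
import Mathlib

section
/- Let g_1,…,g_T be nonzero vectors in ℝ^d and let β* ∈ Δ_T (the probability simplex) minimize ‖∑_i β_i g_i/‖g_i‖‖² over Δ_T, and set d_b = ∑_i β*_i g_i/‖g_i‖. Then for every index i with β*_i > 0, ⟨d_b, g_i⟩ = ‖d_b‖² ‖g_i‖. -/
open RealInnerProductSpace

/-- If a quadratic `A t² + B t` is nonnegative on `(0, t₀]` with `t₀ > 0`, then `B ≥ 0`. -/
lemma edm_aux (A B t0 : ℝ) (ht0 : 0 < t0)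
    (h : ∀ t : ℝ, 0 ≤ t → t ≤ t0 → 0 ≤ A * t ^ 2 + B * t) : 0 ≤ B := by
  by_contra h'
  push_neg at h'
  rcases le_or_gt A 0 with hA | hA
  · have := h t0 ht0.le le_rfl
    nlinarith
  · have hBpos : 0 < -B / (2 * A) := div_pos (by linarith) (by linarith)
    set t := min t0 (-B / (2 * A)) with htdef
    have ht : 0 < t := lt_min ht0 hBpos
    have h1 : t ≤ -B / (2 * A) := min_le_right _ _
    have h2 : A * t ≤ -B / 2 := by
      rw [le_div_iff₀ (by linarith : (0:ℝ) < 2 * A)] at h1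
      linarith
    have := h t ht.le (min_le_left _ _)
    nlinarith

theorem edm_equiangular {d T : ℕ} (g : Fin T → EuclideanSpace ℝ (Fin d))
    (hg : ∀ i, g i ≠ 0)
    (β : Fin T → ℝ) (hβ0 : ∀ i, 0 ≤ β i) (hβ1 : ∑ i, β i = 1)
    (hmin : ∀ β' : Fin T → ℝ, (∀ i, 0 ≤ β' i) → ∑ i, β' i = 1 →
      ‖∑ i, β i • (‖g i‖⁻¹ • g i)‖ ^ 2 ≤ ‖∑ i, β' i • (‖g i‖⁻¹ • g i)‖ ^ 2)
    (db : EuclideanSpace ℝ (Fin d)) (hdb : db = ∑ i, β i • (‖g i‖⁻¹ • g i))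
    (i : Fin T) (hi : 0 < β i) :
    ⟪db, g i⟫ = ‖db‖ ^ 2 * ‖g i‖ := by
  set u : Fin T → EuclideanSpace ℝ (Fin d) := fun j => ‖g j‖⁻¹ • g j with hu
  have hβi1 : β i ≤ 1 := by
    rw [← hβ1]
    exact Finset.single_le_sum (fun j _ => hβ0 j) (Finset.mem_univ i)
  -- general norm expansion
  have hexp : ∀ (v : EuclideanSpace ℝ (Fin d)) (t : ℝ),
      ‖db + t • v‖ ^ 2 = ‖db‖ ^ 2 + (2 * ⟪db, v⟫) * t + ‖v‖ ^ 2 * t ^ 2 := by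
    intro v t
    rw [norm_add_sq_real, real_inner_smul_right, norm_smul]
    simp [mul_pow]
    ring
  -- Direction 1: move mass towards i
  have h1 : 0 ≤ 2 * ⟪db, u i - db⟫ := by
    apply edm_aux (‖u i - db‖ ^ 2) _ 1 one_pos
    intro t ht0 ht1
    have hfeas := hmin (fun j => (1 - t) * β j + t * (if j = i then 1 else 0))
      (fun j => by
        have := hβ0 j
        by_cases hj : j = i <;> simp [hj] <;> nlinarith)
      (by simp [Finset.sum_add_distrib, ← Finset.mul_sum, hβ1, Finset.sum_ite_eq'])
    have hsum : ∑ j, ((1 - t) * β j + t * (if j = i then 1 else 0)) • u j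
        = db + t • (u i - db) := by
      simp only [add_smul, Finset.sum_add_distrib, mul_smul, ← Finset.smul_sum, ite_smul,
        one_smul, zero_smul, Finset.sum_ite_eq', Finset.mem_univ, if_true, ← hdb]
      simp only [hu, ← hdb]
      module
    rw [hsum, hexp, ← hdb] at hfeas
    nlinarith
  -- Direction 2: move mass away from i
  have h2 : 0 ≤ 2 * ⟪db, db - u i⟫ := by
    apply edm_aux (‖db - u i‖ ^ 2) _ (β i) hi
    intro t ht0 ht1
    have hfeas := hmin (fun j => (1 + t) * β j - t * (if j = i then 1 else 0))
      (fun j => by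
        by_cases hj : j = i
        · simp only [hj, if_pos]
          nlinarith [hβ0 i]
        · simp only [if_neg hj]
          nlinarith [hβ0 j])
      (by simp [Finset.sum_sub_distrib, ← Finset.mul_sum, hβ1, Finset.sum_ite_eq'])
    have hsum : ∑ j, ((1 + t) * β j - t * (if j = i then 1 else 0)) • u j
        = db + t • (db - u i) := by
      simp only [sub_smul, Finset.sum_sub_distrib, add_smul, mul_smul, ← Finset.smul_sum,
        ite_smul, one_smul, zero_smul, Finset.sum_ite_eq', Finset.mem_univ, if_true, ← hdb]
      rw [Finset.sum_add_distrib, ← Finset.smul_sum]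
      simp only [hu, ← hdb]
      module
    rw [hsum, hexp, ← hdb] at hfeas
    nlinarith
  have hinner : ⟪db, u i⟫ = ‖db‖ ^ 2 := by
    rw [inner_sub_right] at h1 h2
    rw [real_inner_self_eq_norm_sq] at h1 h2
    linarith
  have hgi : g i = ‖g i‖ • u i := by
    rw [hu]
    simp only []
    rw [smul_smul, mul_inv_cancel₀ (norm_ne_zero_iff.mpr (hg i)), one_smul]
  conv_lhs => rw [hgi]
  rw [real_inner_smul_right, hinner]
  ring
end

section
/- Under the hypotheses of the equiangular direction theorem, if β*_i > 0 for all i = 1,…,T and d_b ≠ 0, then the cosine of the angle between d_b and g_i equals ‖d_b‖ for every i; in particular all these angles are equal. -/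
open RealInnerProductSpace

theorem edm_equal_angles {d T : ℕ} (g : Fin T → EuclideanSpace ℝ (Fin d))
    (hg : ∀ i, g i ≠ 0)
    (β : Fin T → ℝ) (hβ0 : ∀ i, 0 < β i) (hβ1 : ∑ i, β i = 1)
    (hmin : ∀ β' : Fin T → ℝ, (∀ i, 0 ≤ β' i) → ∑ i, β' i = 1 →
      ‖∑ i, β i • (‖g i‖⁻¹ • g i)‖ ^ 2 ≤ ‖∑ i, β' i • (‖g i‖⁻¹ • g i)‖ ^ 2)
    (db : EuclideanSpace ℝ (Fin d)) (hdb : db = ∑ i, β i • (‖g i‖⁻¹ • g i))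
    (hdb0 : db ≠ 0) :
    ∀ i, ⟪db, g i⟫ / (‖db‖ * ‖g i‖) = ‖db‖ := by
  have key : ∀ i j : Fin T,
      ⟪db, ‖g i‖⁻¹ • g i⟫ = ⟪db, ‖g j‖⁻¹ • g j⟫ := by
    intro i j
    by_cases hij : i = j
    · rw [hij]
    set v : EuclideanSpace ℝ (Fin d) := (‖g i‖⁻¹ • g i) - (‖g j‖⁻¹ • g j) with hv
    set c : ℝ := ⟪db, v⟫ with hc
    set ε : ℝ := min (β i) (β j) with hε
    have hεpos : 0 < ε := lt_min (hβ0 i) (hβ0 j)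
    have hquad : ∀ t : ℝ, |t| ≤ ε → 0 ≤ 2 * t * c + t ^ 2 * ‖v‖ ^ 2 := by
      intro t ht
      set β' : Fin T → ℝ :=
        fun k => β k + t * ((if k = i then 1 else 0) - (if k = j then 1 else 0)) with hβ'
      have hnn : ∀ k, 0 ≤ β' k := by
        intro k
        have h1 : -ε ≤ t := neg_le_of_abs_le ht
        simp only [hβ']
        by_cases hki : k = i
        · subst hki
          simp [hij]
          have : ε ≤ β k := min_le_left _ _
          linarith
        · by_cases hkj : k = j
          · subst hkj
            have h2 : t ≤ ε := le_of_abs_le ht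
            simp [hki]
            have : ε ≤ β k := min_le_right _ _
            linarith
          · simp [hki, hkj]
            exact (hβ0 k).le
      have hsum : ∑ k, β' k = 1 := by
        simp only [hβ']
        rw [Finset.sum_add_distrib, hβ1, ← Finset.mul_sum]
        rw [Finset.sum_sub_distrib]
        simp [Finset.sum_ite_eq']
      have hvec : ∑ k, β' k • (‖g k‖⁻¹ • g k) = db + t • v := by
        simp only [hβ', add_smul, mul_smul, sub_smul, ite_smul, one_smul, zero_smul]
        rw [Finset.sum_add_distrib, ← hdb, ← Finset.smul_sum, Finset.sum_sub_distrib]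
        simp [Finset.sum_ite_eq', hv]
      have hle := hmin β' hnn hsum
      rw [hvec, ← hdb] at hle
      have hexp : ‖db + t • v‖ ^ 2 = ‖db‖ ^ 2 + 2 * (t * c) + t ^ 2 * ‖v‖ ^ 2 := by
        rw [@norm_add_sq_real, real_inner_smul_right, norm_smul]
        simp only [mul_pow, Real.norm_eq_abs, sq_abs]
        rfl
      rw [hexp] at hle
      linarith
    have hc0 : c = 0 := by
      by_contra hcne
      set k := ‖v‖ ^ 2 with hk
      have hk0 : 0 ≤ k := sq_nonneg _
      set s : ℝ := min (ε / |c|) (1 / (k + 1)) with hs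
      have hcpos : 0 < |c| := abs_pos.mpr hcne
      have hspos : 0 < s := lt_min (div_pos hεpos hcpos) (by positivity)
      have hs1 : s ≤ 1 / (k + 1) := min_le_right _ _
      have hs2 : s * (k + 1) ≤ 1 := by
        rw [← le_div_iff₀ (by positivity)] at *
        exact hs1
      have habs : |(-c * s)| ≤ ε := by
        rw [abs_mul, abs_neg, abs_of_pos hspos]
        have : s ≤ ε / |c| := min_le_left _ _
        calc |c| * s ≤ |c| * (ε / |c|) := by
              exact mul_le_mul_of_nonneg_left this hcpos.le
          _ = ε := by field_simp
      have hq := hquad (-c * s) habs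
      have hc2 : 0 < c ^ 2 := by positivity
      nlinarith [mul_pos hc2 hspos, mul_pos (mul_pos hc2 hspos) hspos]
    have : ⟪db, ‖g i‖⁻¹ • g i⟫ - ⟪db, ‖g j‖⁻¹ • g j⟫ = 0 := by
      rw [← inner_sub_right]; exact hc0
    linarith
  -- now ⟪db, u i⟫ = ‖db‖^2
  intro i
  have hdbsq : ⟪db, db⟫ = ∑ k, β k * ⟪db, ‖g k‖⁻¹ • g k⟫ := by
    nth_rewrite 2 [hdb]
    rw [inner_sum]
    simp only [real_inner_smul_right]
  have hconst : ∑ k, β k * ⟪db, ‖g k‖⁻¹ • g k⟫ = ⟪db, ‖g i‖⁻¹ • g i⟫ := by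
    have : ∀ k, β k * ⟪db, ‖g k‖⁻¹ • g k⟫ = β k * ⟪db, ‖g i‖⁻¹ • g i⟫ := by
      intro k; rw [key k i]
    rw [Finset.sum_congr rfl (fun k _ => this k), ← Finset.sum_mul, hβ1, one_mul]
  have hinner : ⟪db, ‖g i‖⁻¹ • g i⟫ = ‖db‖ ^ 2 := by
    rw [← hconst, ← hdbsq, real_inner_self_eq_norm_sq]
  have hgi : ‖g i‖ ≠ 0 := norm_ne_zero_iff.mpr (hg i)
  have hdbn : ‖db‖ ≠ 0 := norm_ne_zero_iff.mpr hdb0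
  rw [real_inner_smul_right] at hinner
  have h2 : ⟪db, g i⟫ = ‖g i‖ * ‖db‖ ^ 2 := by
    rw [← hinner, ← mul_assoc, mul_inv_cancel₀ hgi, one_mul]
  rw [h2]
  field_simp
end

section
/- Let g_1,…,g_T be nonzero vectors in ℝ^d such that 0 does not lie in the convex hull of the unit vectors u_i = g_i/‖g_i‖, β* the simplex minimizer of ‖∑ β_i u_i‖², and d_b = ∑ β*_i u_i ≠ 0. Then ⟨d_b, g_i⟩ ≥ ‖d_b‖² ‖g_i‖ > 0 for every i = 1,…,T, so −d_b simultaneously decreases all losses to first order. -/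
open RealInnerProductSpace

theorem edm_common_descent {d T : ℕ} (g : Fin T → EuclideanSpace ℝ (Fin d))
    (hg : ∀ i, g i ≠ 0)
    (hhull : (0 : EuclideanSpace ℝ (Fin d)) ∉
      convexHull ℝ (Set.range fun i => ‖g i‖⁻¹ • g i))
    (β : Fin T → ℝ) (hβ0 : ∀ i, 0 ≤ β i) (hβ1 : ∑ i, β i = 1)
    (hmin : ∀ β' : Fin T → ℝ, (∀ i, 0 ≤ β' i) → ∑ i, β' i = 1 →
      ‖∑ i, β i • (‖g i‖⁻¹ • g i)‖ ^ 2 ≤ ‖∑ i, β' i • (‖g i‖⁻¹ • g i)‖ ^ 2)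
    (db : EuclideanSpace ℝ (Fin d)) (hdb : db = ∑ i, β i • (‖g i‖⁻¹ • g i))
    (hdb0 : db ≠ 0) :
    ∀ i, ‖db‖ ^ 2 * ‖g i‖ ≤ ⟪db, g i⟫ ∧ 0 < ‖db‖ ^ 2 * ‖g i‖ := by
  intro i
  set u : Fin T → EuclideanSpace ℝ (Fin d) := fun j => ‖g j‖⁻¹ • g j with hu
  have hgi : (0:ℝ) < ‖g i‖ := norm_pos_iff.mpr (hg i)
  have hdbsq : (0:ℝ) < ‖db‖ ^ 2 := pow_pos (norm_pos_iff.mpr hdb0) 2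
  -- key step: for 0 < t ≤ 1, ‖db‖² ≤ ‖(1-t)•db + t•u i‖²
  have key : ∀ t : ℝ, 0 < t → t ≤ 1 →
      ‖db‖ ^ 2 ≤ ‖(1 - t) • db + t • u i‖ ^ 2 := by
    intro t ht0 ht1
    have h := hmin (fun j => (1 - t) * β j + t * (if j = i then 1 else 0))
      (fun j => add_nonneg (mul_nonneg (by linarith) (hβ0 j))
        (mul_nonneg ht0.le (by split <;> norm_num)))
      (by
        rw [Finset.sum_add_distrib, ← Finset.mul_sum, ← Finset.mul_sum, hβ1]
        simp)
    rw [hdb]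
    refine le_trans h (le_of_eq ?_)
    congr 1
    simp only [hu]
    simp only [add_smul, Finset.sum_add_distrib, mul_smul]
    rw [← Finset.smul_sum, ← Finset.smul_sum]
    congr 1 <;> simp [ite_smul]
  -- deduce ⟪db, u i - db⟫ ≥ 0
  set v : EuclideanSpace ℝ (Fin d) := u i - db with hv
  have expand : ∀ t : ℝ, ‖(1 - t) • db + t • u i‖ ^ 2
      = ‖db‖ ^ 2 + 2 * t * ⟪db, v⟫ + t ^ 2 * ‖v‖ ^ 2 := by
    intro t
    have h1 : (1 - t) • db + t • u i = db + t • v := by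
      rw [hv]; module
    rw [h1, norm_add_sq_real, real_inner_smul_right, norm_smul]
    simp only [Real.norm_eq_abs, mul_pow, sq_abs]
    ring
  have hstep : ∀ t : ℝ, 0 < t → t ≤ 1 → 0 ≤ 2 * ⟪db, v⟫ + t * ‖v‖ ^ 2 := by
    intro t ht0 ht1
    have := key t ht0 ht1
    rw [expand t] at this
    nlinarith
  have hA : 0 ≤ ⟪db, v⟫ := by
    by_contra h
    push_neg at h
    set A := ⟪db, v⟫
    set B := ‖v‖ ^ 2 with hB
    have hB0 : 0 ≤ B := by positivity
    rcases le_or_gt B (-A) with hc | hc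
    · have := hstep 1 one_pos le_rfl
      nlinarith
    · have hBpos : 0 < B := by linarith
      have hstep2 := hstep (-A / B) (div_pos (by linarith) hBpos) (by
        rw [div_le_one hBpos]; linarith)
      rw [div_mul_cancel₀ _ (ne_of_gt hBpos)] at hstep2
      linarith
  -- conclude
  have hinner : ‖db‖ ^ 2 ≤ ⟪db, u i⟫ := by
    have h2 : ⟪db, u i⟫ = ⟪db, db⟫ + ⟪db, v⟫ := by
      rw [hv, inner_sub_right]; ring
    rw [h2, real_inner_self_eq_norm_sq]
    linarith
  have hkey2 : ⟪db, g i⟫ = ‖g i‖ * ⟪db, u i⟫ := by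
    have hgu : g i = ‖g i‖ • u i := by
      rw [hu]; simp [smul_smul, mul_inv_cancel₀ (ne_of_gt hgi)]
    conv_lhs => rw [hgu]
    rw [real_inner_smul_right]
  constructor
  · rw [hkey2]
    calc ‖db‖ ^ 2 * ‖g i‖ = ‖g i‖ * ‖db‖ ^ 2 := by ring
    _ ≤ ‖g i‖ * ⟪db, u i⟫ := mul_le_mul_of_nonneg_left hinner hgi.le
  · positivity
end
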